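/- Let f : E → ℝ be convex, let p ≥ 1 be an integer, L > 0, and x̄ ∈ E. Let h : E → ℝ have L-Lipschitz p-th derivative and satisfy h(x̄) = 0 and D^i h(x̄) = 0 for i = 1, …, p. If x⁺ is a global minimizer over E of f + h, then −∇h(x⁺) is a subgradient of f at x⁺ and ‖∇h(x⁺)‖ ≤ (L/p!)·‖x⁺ − x̄‖^p. -/

import Mathlib

open scoped RealInnerProductSpace BigOperators

variable {E : Type*} [NormedAddCommGroup E] [InnerProductSpace ℝ E] [FiniteDimensional ℝ E]

/-- `ψ : E → ℝ` is `p` times continuously differentiable and its `p`-th Fréchet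
derivative is `L`-Lipschitz. -/
def HasLipschitzDerivOfOrder (p : ℕ) (L : ℝ) (ψ : E → ℝ) : Prop :=
  ContDiff ℝ p ψ ∧
    ∀ x y : E, ‖iteratedFDeriv ℝ p ψ x - iteratedFDeriv ℝ p ψ y‖ ≤ L * ‖x - y‖

/-- Mean value inequality with a power-type bound on the derivative. -/
lemma mvt_pow_aux {F : Type*} [NormedAddCommGroup F] [NormedSpace ℝ F]
    (g : E → F) (hg : Differentiable ℝ g) (xbar x : E) (C : ℝ) (hC : 0 ≤ C) (m : ℕ)
    (hb : ∀ z : E, ‖fderiv ℝ g z‖ ≤ C * ‖z - xbar‖ ^ m) :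
    ‖g x - g xbar‖ ≤ C / (m + 1) * ‖x - xbar‖ ^ (m + 1) := by
  set v : E := x - xbar with hv
  set φ : ℝ → F := fun t => g (xbar + t • v) - g xbar with hφ
  set φ' : ℝ → F := fun t => fderiv ℝ g (xbar + t • v) v with hφ'def
  have hline : ∀ t : ℝ, HasDerivAt (fun s : ℝ => xbar + s • v) v t := by
    intro t
    simpa using ((hasDerivAt_id t).smul_const v).const_add xbar
  have hφ' : ∀ t ∈ Set.Ico (0:ℝ) 1, HasDerivWithinAt φ (φ' t) (Set.Ici t) t := by
    intro t _
    exact (((hg _).hasFDerivAt.comp_hasDerivAt t (hline t)).sub_const _).hasDerivWithinAt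
  set B : ℝ → ℝ := fun t => C * ‖v‖ ^ (m + 1) * (t ^ (m + 1) / (m + 1)) with hB
  set B' : ℝ → ℝ := fun t => C * ‖v‖ ^ (m + 1) * t ^ m with hB'
  have hBderiv : ∀ t : ℝ, HasDerivAt B (B' t) t := by
    intro t
    have h1 : HasDerivAt (fun s : ℝ => C * ‖v‖ ^ (m + 1) * (s ^ (m + 1) / (m + 1)))
        (C * ‖v‖ ^ (m + 1) * (((m + 1 : ℕ) : ℝ) * t ^ m / (m + 1))) t :=
      ((hasDerivAt_pow (m + 1) t).div_const _).const_mul _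
    convert h1 using 1
    have : ((m : ℝ) + 1) ≠ 0 := by positivity
    field_simp
    simp only [hB']; push_cast; ring
  have hcont : Continuous φ := by
    exact (hg.continuous.comp (continuous_const.add (continuous_id.smul continuous_const))).sub
      continuous_const
  have ha : ‖φ 0‖ ≤ B 0 := by simp [hφ, hB]
  have bound : ∀ t ∈ Set.Ico (0:ℝ) 1, ‖φ' t‖ ≤ B' t := by
    intro t ht
    have h1 : ‖φ' t‖ ≤ ‖fderiv ℝ g (xbar + t • v)‖ * ‖v‖ :=
      (fderiv ℝ g (xbar + t • v)).le_opNorm v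
    have h2 : ‖fderiv ℝ g (xbar + t • v)‖ ≤ C * ‖xbar + t • v - xbar‖ ^ m := hb _
    have h3 : ‖xbar + t • v - xbar‖ = t * ‖v‖ := by
      rw [add_sub_cancel_left, norm_smul, Real.norm_eq_abs, abs_of_nonneg ht.1]
    calc ‖φ' t‖ ≤ (C * ‖xbar + t • v - xbar‖ ^ m) * ‖v‖ := by
          refine h1.trans ?_
          exact mul_le_mul_of_nonneg_right h2 (norm_nonneg v)
      _ = B' t := by rw [h3, hB']; ring
  have key := image_norm_le_of_norm_deriv_right_le_deriv_boundary hcont.continuousOn hφ' ha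
    hBderiv bound (Set.right_mem_Icc.2 zero_le_one)
  have hφ1 : φ 1 = g x - g xbar := by simp [hφ, hv]
  have hB1 : B 1 = C * ‖v‖ ^ (m + 1) / (m + 1) := by simp [hB, div_eq_mul_inv]
  rw [hφ1] at key
  rw [hB1] at key
  calc ‖g x - g xbar‖ ≤ C * ‖v‖ ^ (m + 1) / (m + 1) := key
    _ = C / (m + 1) * ‖x - xbar‖ ^ (m + 1) := by rw [hv]; ring

/-- If `x⁺` globally minimizes `f + h`, where `h` has `L`-Lipschitz `p`-th derivative and
vanishes to order `p` at `x̄`, then `-∇h(x⁺)` is a subgradient of the convex `f` at `x⁺`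
and `‖∇h(x⁺)‖ ≤ (L/p!)·‖x⁺ - x̄‖^p`. -/
theorem subgradient_norm_bound_at_surrogate_minimizer
    (f : E → ℝ) (hf : ConvexOn ℝ Set.univ f)
    (p : ℕ) (hp : 1 ≤ p) (L : ℝ) (hL : 0 < L)
    (xbar : E) (h : E → ℝ)
    (hh : HasLipschitzDerivOfOrder p L h)
    (hh0 : h xbar = 0)
    (hhi : ∀ i : ℕ, 1 ≤ i → i ≤ p → iteratedFDeriv ℝ i h xbar = 0)
    (xplus : E) (hmin : ∀ y : E, f xplus + h xplus ≤ f y + h y) :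
    (∀ y : E, f xplus + ⟪-(gradient h xplus), y - xplus⟫ ≤ f y) ∧
    ‖gradient h xplus‖ ≤ L / (Nat.factorial p : ℝ) * ‖xplus - xbar‖ ^ p := by
  obtain ⟨hcd, hlip⟩ := hh
  have hdiff : Differentiable ℝ h := hcd.differentiable (by exact_mod_cast Nat.one_le_iff_ne_zero.mp hp)
  -- all derivatives of order ≤ p vanish at xbar
  have hvan : ∀ i : ℕ, i ≤ p → iteratedFDeriv ℝ i h xbar = 0 := by
    intro i hi
    rcases Nat.eq_zero_or_pos i with h0 | h1
    · subst h0
      have : ‖iteratedFDeriv ℝ 0 h xbar‖ = 0 := by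
        rw [norm_iteratedFDeriv_zero, hh0, norm_zero]
      exact norm_eq_zero.mp this
    · exact hhi i h1 hi
  -- key induction: ‖D^(p-k) h x‖ ≤ L/(k+1)! ‖x - xbar‖^(k+1) for k < p
  have key : ∀ k : ℕ, k < p → ∀ x : E,
      ‖iteratedFDeriv ℝ (p - k) h x‖ ≤
        L / (Nat.factorial (k + 1) : ℝ) * ‖x - xbar‖ ^ (k + 1) := by
    intro k
    induction k with
    | zero =>
      intro _ x
      have := hlip x xbar
      rw [hvan p le_rfl, sub_zero] at this
      simpa using this
    | succ k ih =>
      intro hk1 x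
      have hk : k < p := Nat.lt_of_succ_lt hk1
      have hdg : Differentiable ℝ (iteratedFDeriv ℝ (p - (k + 1)) h) :=
        hcd.differentiable_iteratedFDeriv
          (by exact_mod_cast Nat.sub_lt (by omega : 0 < p) (by omega : 0 < k + 1))
      have hfd : ∀ z : E, ‖fderiv ℝ (iteratedFDeriv ℝ (p - (k + 1)) h) z‖ ≤
          (L / (Nat.factorial (k + 1) : ℝ)) * ‖z - xbar‖ ^ (k + 1) := by
        intro z
        have heq : p - (k + 1) + 1 = p - k := by omega
        rw [norm_fderiv_iteratedFDeriv, heq]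
        exact ih hk z
      have hmvt := mvt_pow_aux (iteratedFDeriv ℝ (p - (k + 1)) h) hdg xbar x
        (L / (Nat.factorial (k + 1) : ℝ)) (by positivity) (k + 1) hfd
      rw [hvan (p - (k + 1)) (by omega), sub_zero] at hmvt
      refine hmvt.trans_eq ?_
      congr 1
      rw [div_div, Nat.factorial_succ (k + 1)]
      push_cast
      ring
  constructor
  · -- subgradient inequality
    intro y
    set v : E := y - xplus with hv
    set D : E →L[ℝ] ℝ := fderiv ℝ h xplus with hD
    have hinner : ⟪gradient h xplus, v⟫ = D v := by
      rw [gradient, InnerProductSpace.toDual_symm_apply]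
    have hline : HasDerivAt (fun t : ℝ => xplus + t • v) v 0 := by
      simpa using ((hasDerivAt_id (0:ℝ)).smul_const v).const_add xplus
    have hφ : HasDerivAt (fun t : ℝ => h (xplus + t • v)) (D v) 0 := by
      have hfd : HasFDerivAt h D (xplus + (0:ℝ) • v) := by
        simpa using (hdiff xplus).hasFDerivAt
      exact hfd.comp_hasDerivAt 0 hline
    have hslope := hasDerivAt_iff_tendsto_slope.mp hφ
    have hslope' : Filter.Tendsto (fun t => -slope (fun t : ℝ => h (xplus + t • v)) 0 t)
        (nhdsWithin 0 (Set.Ioi 0)) (nhds (-(D v))) := by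
      exact (hslope.mono_left (nhdsWithin_mono 0 fun t ht => ne_of_gt ht)).neg
    have hbound : ∀ᶠ t in nhdsWithin (0:ℝ) (Set.Ioi 0),
        -slope (fun t : ℝ => h (xplus + t • v)) 0 t ≤ f y - f xplus := by
      filter_upwards [Ioc_mem_nhdsGT_of_mem ⟨le_refl (0:ℝ), zero_lt_one⟩] with t ht
      have ht0 : 0 < t := ht.1
      have ht1 : t ≤ 1 := ht.2
      have hconv : f (xplus + t • v) ≤ (1 - t) * f xplus + t * f y := by
        have hcomb := hf.2 (Set.mem_univ xplus) (Set.mem_univ y)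
          (by linarith : (0:ℝ) ≤ 1 - t) (le_of_lt ht0) (by ring)
        have hrw : (1 - t) • xplus + t • y = xplus + t • v := by
          rw [hv]; module
        rw [hrw] at hcomb
        simpa using hcomb
      have hmin' := hmin (xplus + t • v)
      have hkey : h xplus - h (xplus + t • v) ≤ t * (f y - f xplus) := by nlinarith
      rw [slope_def_field]
      simp only [zero_smul, add_zero, sub_zero]
      rw [← neg_div, neg_sub, div_le_iff₀ ht0]
      nlinarith [hkey]
    have hlim := le_of_tendsto hslope' hbound
    have : ⟪-(gradient h xplus), y - xplus⟫ = -(D v) := by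
      rw [inner_neg_left, ← hv, hinner]
    rw [this]
    linarith [hlim]
  · -- norm bound
    have hk := key (p - 1) (by omega) xplus
    have e1 : p - (p - 1) = 1 := by omega
    have e2 : p - 1 + 1 = p := by omega
    rw [e1, e2] at hk
    have hnorm : ‖gradient h xplus‖ = ‖iteratedFDeriv ℝ 1 h xplus‖ := by
      rw [gradient, LinearIsometryEquiv.norm_map]
      rw [← norm_iteratedFDeriv_fderiv, norm_iteratedFDeriv_zero]
    rw [hnorm]
    exact hk
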